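/- Every F-algebra A is isomorphic to an F-twist algebra over ◇(A) via ι(a) := (◇a, ◇¬a); in particular ι(a → b) = (◇a → ◇b, ◇¬a ∨ ◇¬b) = ι(a) → ι(b). -/
import Mathlib


/-- An F-algebra: a centered Kleene algebra (distributive lattice with involutive
De Morgan negation satisfying the Kleene inequality, with center `½`) with an
implication satisfying (F1)–(F6), where `◇x := x ⊓ ½`. -/
class FAlgebra (A : Type*) extends DistribLattice A where
  neg : A → A
  half : A
  imp : A → A → A
  neg_neg : ∀ a : A, neg (neg a) = a
  neg_inf : ∀ a b : A, neg (a ⊓ b) = neg a ⊔ neg b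
  kleene : ∀ a b : A, neg a ⊓ a ≤ neg b ⊔ b
  neg_half : neg half = half
  f1 : ∀ x y : A, x ⊓ y = x ⊓ imp x y
  f2 : ∀ x y : A, imp x y ≤ (x ⊓ y) ⊔ half
  f3 : ∀ x y z : A, imp (x ⊓ y) z = imp x (imp y z)
  f4 : ∀ x y : A, half ≤ imp x (imp y y)
  f5 : ∀ x y : A, half ≤ imp (imp (imp x y) x) x
  f6 : ∀ x y : A, imp x y ⊓ half = imp (x ⊓ half) (y ⊓ half)

open FAlgebra

lemma FAlgebra.neg_sup {A : Type*} [FAlgebra A] (a b : A) :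
    neg (a ⊔ b) = neg a ⊓ neg b := by
  have := neg_inf (neg a) (neg b)
  rw [neg_neg, neg_neg] at this
  rw [← this, neg_neg]

lemma FAlgebra.half_le_sup {A : Type*} [FAlgebra A] (a : A) : half ≤ neg a ⊔ a := by
  have := kleene (half : A) a
  rwa [neg_half, inf_idem] at this

lemma FAlgebra.imp_sup_half {A : Type*} [FAlgebra A] (a b : A) :
    imp a b ⊔ half = (a ⊓ b) ⊔ half := by
  apply le_antisymm
  · exact sup_le (f2 a b) le_sup_right
  · have h : a ⊓ b ≤ imp a b := by
      rw [f1]; exact inf_le_right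
    exact sup_le (h.trans le_sup_left) le_sup_right

/-- F-twist representation: every F-algebra `A` is isomorphic to an
F-twist algebra over `◇(A)` via `ι(a) := (◇a, ◇¬a)`: `ι` lands in the twist
universe, is injective, preserves `⊓`, `¬`, `½` and the implication:
`ι(a → b) = (◇a → ◇b, ◇¬a ⊔ ◇¬b) = ι(a) → ι(b)` for the twist implication
`(x₁,y₁) → (x₂,y₂) := (x₁ → x₂, y₁ ⊔ y₂)`. -/
theorem f_twist_representation {A : Type*} [FAlgebra A] :
    let ι : A → A × A := fun a => (a ⊓ half, neg a ⊓ half)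
    (∀ a : A, (ι a).1 ⊔ (ι a).2 = half) ∧
    Function.Injective ι ∧
    (∀ a b : A, ι (a ⊓ b) = ((ι a).1 ⊓ (ι b).1, (ι a).2 ⊔ (ι b).2)) ∧
    (∀ a : A, ι (neg a) = ((ι a).2, (ι a).1)) ∧
    ι half = (half, half) ∧
    (∀ a b : A, ι (imp a b) = (imp ((ι a).1) ((ι b).1), (ι a).2 ⊔ (ι b).2)) ∧
    Prod.fst '' Set.range ι = Set.range (fun x : A => x ⊓ half) := by
  intro ι
  refine ⟨?_, ?_, ?_, ?_, ?_, ?_, ?_⟩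
  · intro a
    show (a ⊓ half) ⊔ (neg a ⊓ half) = half
    rw [← inf_sup_right]
    exact inf_eq_right.mpr (by simpa [sup_comm] using FAlgebra.half_le_sup a)
  · intro a b h
    have h1 : a ⊓ half = b ⊓ half := congrArg Prod.fst h
    have h2 : neg a ⊓ half = neg b ⊓ half := congrArg Prod.snd h
    have h3 : a ⊔ half = b ⊔ half := by
      have := congrArg neg h2
      rwa [FAlgebra.neg_inf, FAlgebra.neg_inf, FAlgebra.neg_neg, FAlgebra.neg_neg, neg_half] at this
    exact eq_of_inf_eq_sup_eq h1 h3
  · intro a b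
    show ((a ⊓ b) ⊓ half, neg (a ⊓ b) ⊓ half)
        = ((a ⊓ half) ⊓ (b ⊓ half), (neg a ⊓ half) ⊔ (neg b ⊓ half))
    refine Prod.ext ?_ ?_
    · simp only [inf_assoc, inf_comm, inf_left_comm, inf_idem]
    · show neg (a ⊓ b) ⊓ half = _
      rw [FAlgebra.neg_inf, inf_sup_right]
  · intro a
    show (neg a ⊓ half, neg (neg a) ⊓ half) = (neg a ⊓ half, a ⊓ half)
    rw [FAlgebra.neg_neg]
  · show (half ⊓ half, neg half ⊓ half) = (half, half)
    rw [neg_half, inf_idem]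
  · intro a b
    show (imp a b ⊓ half, neg (imp a b) ⊓ half)
        = (imp (a ⊓ half) (b ⊓ half), (neg a ⊓ half) ⊔ (neg b ⊓ half))
    refine Prod.ext (f6 a b) ?_
    show neg (imp a b) ⊓ half = _
    have : neg (imp a b) ⊓ half = neg (imp a b ⊔ half) := by
      rw [FAlgebra.neg_sup, neg_half]
    rw [this, FAlgebra.imp_sup_half, FAlgebra.neg_sup, neg_half, FAlgebra.neg_inf, inf_sup_right]
  · ext x
    simp only [Set.mem_image, Set.mem_range]
    constructor
    · rintro ⟨p, ⟨a, rfl⟩, rfl⟩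
      exact ⟨a, rfl⟩
    · rintro ⟨a, rfl⟩
      exact ⟨ι a, ⟨a, rfl⟩, rfl⟩
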